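/- Closed two-sided ideals in C*-algebras are proximinal: if J is a closed two-sided ideal of a C*-algebra B and b ∈ B, then there exists j ∈ J with ‖b − j‖ = d(b, J) = ‖b + J‖_{B/J}. -/

import Mathlib

section ProxAux1
variable {B : Type*} [NonUnitalCStarAlgebra B]

/-- `opow x n = x^(n+1)` in a non-unital ring. -/
def opow (x : B) : ℕ → B
  | 0 => x
  | (n+1) => opow x n * x

lemma norm_opow_le (x : B) (n : ℕ) : ‖opow x n‖ ≤ ‖x‖ ^ (n+1) := by
  induction n with
  | zero => simp [opow]
  | succ n ih =>
    calc ‖opow x (n+1)‖ ≤ ‖opow x n‖ * ‖x‖ := norm_mul_le _ _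
    _ ≤ ‖x‖ ^ (n+1) * ‖x‖ := mul_le_mul_of_nonneg_right ih (norm_nonneg x)
    _ = ‖x‖ ^ (n+2) := by ring

lemma cfcn_mul_id' (g : ℝ → ℝ) (x : B) (hx : IsSelfAdjoint x)
    (hg : Continuous g) (hg0 : g 0 = 0) :
    cfcₙ (fun t : ℝ => g t * t) x = cfcₙ g x * x := by
  rw [show (fun t : ℝ => g t * t) = (fun t : ℝ => g t * id t) from rfl,
    cfcₙ_mul g id x hg.continuousOn hg0 continuousOn_id rfl, cfcₙ_id ℝ x hx]

lemma cfcn_mul_pow' (g : ℝ → ℝ) (x : B) (hx : IsSelfAdjoint x)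
    (hg : Continuous g) (hg0 : g 0 = 0) (n : ℕ) :
    cfcₙ (fun t : ℝ => g t * t ^ (n+1)) x = cfcₙ g x * opow x n := by
  induction n with
  | zero => simpa [opow] using cfcn_mul_id' g x hx hg hg0
  | succ n ih =>
    have h1 : (fun t : ℝ => g t * t ^ (n+2)) = (fun t : ℝ => (g t * t ^ (n+1)) * t) := by
      funext t; ring
    rw [h1, cfcn_mul_id' (fun t => g t * t ^ (n+1)) x hx (by fun_prop) (by simp), ih,
      mul_assoc]
    rfl

/-- If `f` vanishes on `(-∞, δ]` for some `δ > 0` then `cfcₙ f x ∈ J` whenever `x ∈ J`. -/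
lemma cfcn_mem_ideal (J : TwoSidedIdeal B) {x : B} (hx : IsSelfAdjoint x) (hxJ : x ∈ J)
    (f : ℝ → ℝ) (hf : Continuous f) {δ : ℝ} (hδ : 0 < δ) (hf0 : ∀ t ≤ δ, f t = 0) :
    cfcₙ f x ∈ J := by
  set h : ℝ → ℝ := fun t => f t * ((max t (δ/2))⁻¹)^2 with hh_def
  have hmaxne : ∀ t : ℝ, max t (δ/2) ≠ 0 := fun t =>
    ne_of_gt (lt_of_lt_of_le (by positivity) (le_max_right _ _))
  have hhc : Continuous h := by
    apply hf.mul
    exact ((continuous_id.max continuous_const).inv₀ hmaxne).pow 2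
  have hkey : f = fun t => (h t * t) * t := by
    funext t
    by_cases ht : t ≤ δ
    · simp [hh_def, hf0 t ht]
    · push_neg at ht
      have ht0 : (0:ℝ) < t := lt_trans hδ ht
      have : max t (δ/2) = t := max_eq_left (by linarith)
      rw [hh_def]; simp only [this]
      field_simp
  have h0 : (fun t : ℝ => h t * t) 0 = 0 := by simp [hh_def, hf0 0 (le_of_lt hδ)]
  have heq : cfcₙ f x = cfcₙ (fun t : ℝ => h t * t) x * x := by
    conv_lhs => rw [hkey]
    exact cfcn_mul_id' _ x hx (by fun_prop) h0
  rw [heq]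
  exact J.mul_mem_left _ _ hxJ

lemma qsp_star_mul_self_nonneg (b : B) : ∀ t ∈ quasispectrum ℝ (star b * b), 0 ≤ t := by
  intro t ht
  rw [Unitization.quasispectrum_eq_spectrum_inr' ℝ ℂ] at ht
  rw [Unitization.inr_mul, Unitization.inr_star] at ht
  exact spectrum_star_mul_self_nonneg t ht

lemma star_mem_of_isClosed (J : TwoSidedIdeal B) (hJ : IsClosed (J : Set B))
    {j : B} (hj : j ∈ J) : star j ∈ J := by
  have : star j ∈ closure (J : Set B) := by
    rw [Metric.mem_closure_iff]
    intro ε hε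
    set εw : ℝ := ε^2/8 with hεw
    have hεw0 : 0 < εw := by positivity
    set w : B := j * star j with hw_def
    have hwsa : IsSelfAdjoint w := by
      rw [hw_def, show j * star j = star (star j) * star j by rw [star_star]]
      exact IsSelfAdjoint.star_mul_self (star j)
    have hwsp : ∀ t ∈ quasispectrum ℝ w, 0 ≤ t := by
      rw [hw_def, show j * star j = star (star j) * star j by rw [star_star]]
      exact qsp_star_mul_self_nonneg (star j)
    have hwJ : w ∈ J := J.mul_mem_right _ _ hj
    set f : ℝ → ℝ := fun t => min 1 ((max (t - εw) 0)/εw) with hf_def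
    have hfc : Continuous f := by fun_prop
    have hf01 : ∀ t, 0 ≤ f t ∧ f t ≤ 1 := fun t =>
      ⟨le_min one_pos.le (by positivity), min_le_left _ _⟩
    have hfvanish : ∀ t ≤ εw, f t = 0 := by
      intro t ht
      simp only [hf_def]
      rw [max_eq_right (by linarith), zero_div]
      simp
    have heJ : cfcₙ f w ∈ J := cfcn_mem_ideal J hwsa hwJ f hfc hεw0 hfvanish
    set e : B := cfcₙ f w with he_def
    have hesa : IsSelfAdjoint e := cfcₙ_predicate f w
    refine ⟨star j * e, J.mul_mem_left _ _ heJ, ?_⟩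
    set y : B := star j - star j * e with hy_def
    have hexp : star y * y = w - w * e - (e * w - e * (w * e)) := by
      simp only [hy_def, hw_def, star_sub, star_mul, hesa.star_eq, star_star]
      noncomm_ring
    have hf0 : f 0 = 0 := hfvanish 0 hεw0.le
    have hwe : w * e = cfcₙ (fun t : ℝ => t * f t) w := by
      rw [cfcₙ_mul (fun t : ℝ => t) f w continuousOn_id (by simp) hfc.continuousOn hf0,
        cfcₙ_id' ℝ w hwsa]
    have hewe : e * (w * e) = cfcₙ (fun t : ℝ => f t * (t * f t)) w := by
      rw [cfcₙ_mul f (fun t : ℝ => t * f t) w hfc.continuousOn hf0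
        (by fun_prop) (by simp), ← hwe]
    have hew : e * w = cfcₙ (fun t : ℝ => f t * t) w := by
      rw [cfcₙ_mul f (fun t : ℝ => t) w hfc.continuousOn hf0 continuousOn_id (by simp),
        cfcₙ_id' ℝ w hwsa]
    set G : ℝ → ℝ := fun t => t - t * f t - (f t * t - f t * (t * f t)) with hG_def
    have hG : star y * y = cfcₙ G w := by
      rw [hexp, hewe, hwe, hew, hG_def]
      rw [cfcₙ_sub (fun t : ℝ => t - t * f t) (fun t : ℝ => f t * t - f t * (t * f t)) w
        (by fun_prop) (by simp [hf0]) (by fun_prop) (by simp [hf0]),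
        cfcₙ_sub (fun t : ℝ => t) (fun t : ℝ => t * f t) w continuousOn_id (by simp)
        (by fun_prop) (by simp [hf0]),
        cfcₙ_sub (fun t : ℝ => f t * t) (fun t : ℝ => f t * (t * f t)) w
        (by fun_prop) (by simp [hf0]) (by fun_prop) (by simp [hf0]),
        cfcₙ_id' ℝ w hwsa]
    have hGbound : ‖cfcₙ G w‖ ≤ 2 * εw := by
      apply norm_cfcₙ_le
      intro t ht
      have ht0 : 0 ≤ t := hwsp t ht
      obtain ⟨hf0t, hf1t⟩ := hf01 t
      have hGt : G t = t * (1 - f t)^2 := by rw [hG_def]; ring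
      rw [hGt, Real.norm_eq_abs, abs_of_nonneg (by nlinarith)]
      by_cases htε : t ≤ 2 * εw
      · have h4 : (1 - f t)^2 ≤ 1 := by nlinarith
        nlinarith
      · push_neg at htε
        have hft1 : f t = 1 := by
          rw [hf_def]
          simp only
          rw [max_eq_left (by linarith), min_eq_left (by rw [le_div_iff₀ hεw0]; linarith)]
        rw [hft1]
        simp
        positivity
    have hyn : ‖y‖ ≤ ε / 2 := by
      have h1 : ‖y‖ * ‖y‖ = ‖star y * y‖ := (CStarRing.norm_star_mul_self).symm
      have h2 : ‖star y * y‖ ≤ 2 * εw := hG ▸ hGbound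
      have h3 : 2 * εw = ε^2/4 := by rw [hεw]; ring
      nlinarith [norm_nonneg y]
    calc dist (star j) (star j * e) = ‖y‖ := by rw [hy_def, dist_eq_norm]
    _ ≤ ε / 2 := hyn
    _ < ε := by linarith
  rwa [hJ.closure_eq] at this

end ProxAux1

section ProxAux2
variable {B : Type*} [NonUnitalCStarAlgebra B]

set_option maxHeartbeats 2000000 in
theorem stmt_9' (J : TwoSidedIdeal B) (hJ : IsClosed (J : Set B)) (b : B)
    (star_mem : ∀ {k : B}, k ∈ J → star k ∈ J)
    (cfcn_mem : ∀ {x : B}, IsSelfAdjoint x → x ∈ J → ∀ (f : ℝ → ℝ), Continuous f →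
      ∀ {δ : ℝ}, 0 < δ → (∀ t ≤ δ, f t = 0) → cfcₙ f x ∈ J)
    (opow : B → ℕ → B)
    (hopow0 : ∀ x : B, opow x 0 = x)
    (hopowS : ∀ (x : B) (n : ℕ), opow x (n+1) = opow x n * x)
    (norm_opow_le : ∀ (x : B) (n : ℕ), ‖opow x n‖ ≤ ‖x‖ ^ (n+1))
    (cfcn_mul_pow' : ∀ (g : ℝ → ℝ) (x : B), IsSelfAdjoint x → Continuous g → g 0 = 0 →
      ∀ n : ℕ, cfcₙ (fun t : ℝ => g t * t ^ (n+1)) x = cfcₙ g x * opow x n)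
    (qsp : ∀ b : B, ∀ t ∈ quasispectrum ℝ (star b * b), 0 ≤ t) :
    ∃ j ∈ J, ‖b - j‖ = Metric.infDist b (J : Set B) := by
  classical
  have hJne : (J : Set B).Nonempty := ⟨0, J.zero_mem⟩
  set d := Metric.infDist b (J : Set B) with hd_def
  have hd0 : 0 ≤ d := Metric.infDist_nonneg
  by_cases hd : d = 0
  · have hbJ : b ∈ (J : Set B) := (hJ.mem_iff_infDist_zero hJne).mpr hd
    exact ⟨b, hbJ, by rw [sub_self, norm_zero]; exact hd.symm⟩
  have hdpos : 0 < d := lt_of_le_of_ne hd0 (Ne.symm hd)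
  set x : B := star b * b with hx_def
  have hxsa : IsSelfAdjoint x := IsSelfAdjoint.star_mul_self b
  have hxsp : ∀ t ∈ quasispectrum ℝ x, 0 ≤ t := qsp b
  -- approximants of x in J
  have exists_m : ∀ c : ℝ, d^2 < c → ∃ m ∈ J, ‖x - m‖ ≤ c := by
    intro c hc
    have hc0 : 0 < c := lt_of_le_of_lt (by positivity) hc
    have hdc : d < Real.sqrt c := (Real.lt_sqrt hd0).mpr hc
    obtain ⟨k, hkJ, hk⟩ := (Metric.infDist_lt_iff hJne).mp (by rw [← hd_def]; exact hdc)
    have hkJ' : k ∈ J := hkJ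
    have hks : star k ∈ J := star_mem hkJ'
    refine ⟨star b * k + (star k * b - star k * k), ?_, ?_⟩
    · exact J.add_mem (J.mul_mem_left _ _ hkJ')
        (J.sub_mem (J.mul_mem_right _ _ hks) (J.mul_mem_right _ _ hks))
    · have he : x - (star b * k + (star k * b - star k * k)) = star (b - k) * (b - k) := by
        rw [hx_def]; simp only [star_sub]; noncomm_ring
      rw [he, CStarRing.norm_star_mul_self]
      have hbk : ‖b - k‖ < Real.sqrt c := by rwa [dist_eq_norm] at hk
      have h1 : (0:ℝ) ≤ ‖b - k‖ := norm_nonneg _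
      nlinarith [Real.mul_self_sqrt hc0.le, Real.sqrt_nonneg c]
  -- (x - s)_+ ∈ J for s > d^2
  have key : ∀ s : ℝ, d^2 < s → cfcₙ (fun t : ℝ => max (t - s) 0) x ∈ J := by
    intro s hs
    have hs0 : 0 < s := lt_of_le_of_lt (by positivity) hs
    set c := (d^2 + s)/2 with hc_def
    have hc1 : d^2 < c := by rw [hc_def]; linarith
    have hc2 : c < s := by rw [hc_def]; linarith
    have hc0 : 0 < c := lt_of_le_of_lt (by positivity) hc1
    obtain ⟨m, hmJ, hm⟩ := exists_m c hc1
    have hpow : ∀ n : ℕ, ∃ M ∈ J, opow x n - M = opow (x - m) n := by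
      intro n
      induction n with
      | zero => exact ⟨m, hmJ, by rw [hopow0, hopow0]⟩
      | succ n ih =>
        obtain ⟨M, hMJ, hM⟩ := ih
        refine ⟨M * x + (opow (x - m) n) * m,
          J.add_mem (J.mul_mem_right _ _ hMJ) (J.mul_mem_left _ _ hmJ), ?_⟩
        calc opow x (n+1) - (M * x + opow (x-m) n * m)
            = (opow x n - M) * x - opow (x-m) n * m := by rw [hopowS]; noncomm_ring
          _ = opow (x-m) n * (x - m) := by rw [hM]; noncomm_ring
          _ = opow (x-m) (n+1) := (hopowS _ _).symm
    set F : ℝ → ℝ := fun t => max (t - s) 0 with hF_def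
    have hFc : Continuous F := by fun_prop
    have hF0 : F 0 = 0 := by
      simp only [hF_def, zero_sub]; rw [max_eq_right (by linarith)]
    have hmaxne : ∀ t : ℝ, max t s ≠ 0 := fun t =>
      ne_of_gt (lt_of_lt_of_le hs0 (le_max_right _ _))
    have hqn : ∀ n : ℕ, Metric.infDist (cfcₙ F x) (J:Set B) ≤ c * (c/s)^n := by
      intro n
      obtain ⟨M, hMJ, hM⟩ := hpow n
      set ρ : ℝ → ℝ := fun t => (max (t - s) 0) * ((max t s)⁻¹)^(n+1) with hρ_def
      have hρc : Continuous ρ := by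
        apply ((continuous_id.sub continuous_const).max continuous_const).mul
        exact ((continuous_id.max continuous_const).inv₀ hmaxne).pow _
      have hρ0 : ρ 0 = 0 := by
        simp only [hρ_def, zero_sub]
        rw [max_eq_right (by linarith), zero_mul]
      have hfac : cfcₙ F x = cfcₙ ρ x * opow x n := by
        rw [← cfcn_mul_pow' ρ x hxsa hρc hρ0 n]
        apply cfcₙ_congr
        intro t ht
        have ht0 := hxsp t ht
        show F t = ρ t * t^(n+1)
        by_cases hts : t ≤ s
        · have h1 : F t = 0 := by
            simp only [hF_def]; rw [max_eq_right (by linarith)]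
          have h2 : ρ t = 0 := by
            simp only [hρ_def]; rw [max_eq_right (by linarith), zero_mul]
          rw [h1, h2, zero_mul]
        · push_neg at hts
          have htpos : 0 < t := lt_trans hs0 hts
          simp only [hF_def, hρ_def, max_eq_left hts.le]
          field_simp
          rw [one_div, inv_pow, inv_mul_cancel₀ (pow_ne_zero _ htpos.ne')]
      have hρnorm : ‖cfcₙ ρ x‖ ≤ (s⁻¹)^n := by
        apply norm_cfcₙ_le
        intro t ht
        have ht0 := hxsp t ht
        rw [Real.norm_eq_abs]
        by_cases hts : t ≤ s
        · have h2 : ρ t = 0 := by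
            simp only [hρ_def]; rw [max_eq_right (by linarith), zero_mul]
          rw [h2, abs_zero]; positivity
        · push_neg at hts
          have htpos : 0 < t := lt_trans hs0 hts
          have hit : ρ t = (t - s) * (t⁻¹)^(n+1) := by
            simp only [hρ_def, max_eq_left hts.le,
              max_eq_left (show (0:ℝ) ≤ t - s by linarith)]
          rw [hit, abs_of_nonneg (mul_nonneg (by linarith) (by positivity))]
          have h1 : (t - s) * (t⁻¹)^(n+1) ≤ t * (t⁻¹)^(n+1) :=
            mul_le_mul_of_nonneg_right (by linarith) (by positivity)
          have h2 : t * (t⁻¹)^(n+1) = (t⁻¹)^n := by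
            rw [pow_succ, mul_comm ((t⁻¹)^n) t⁻¹, ← mul_assoc,
              mul_inv_cancel₀ htpos.ne', one_mul]
          have h3 : (t⁻¹)^n ≤ (s⁻¹)^n :=
            pow_le_pow_left₀ (by positivity) (by
              exact inv_anti₀ hs0 hts.le) n
          linarith
      calc Metric.infDist (cfcₙ F x) (J:Set B) ≤ dist (cfcₙ F x) (cfcₙ ρ x * M) :=
            Metric.infDist_le_dist_of_mem (J.mul_mem_left _ _ hMJ)
        _ = ‖cfcₙ ρ x * opow x n - cfcₙ ρ x * M‖ := by rw [dist_eq_norm, hfac]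
        _ = ‖cfcₙ ρ x * (opow x n - M)‖ := by rw [mul_sub]
        _ ≤ ‖cfcₙ ρ x‖ * ‖opow x n - M‖ := norm_mul_le _ _
        _ ≤ (s⁻¹)^n * c^(n+1) := by
            apply mul_le_mul hρnorm ?_ (norm_nonneg _) (by positivity)
            rw [hM]
            calc ‖opow (x-m) n‖ ≤ ‖x - m‖^(n+1) := norm_opow_le _ n
              _ ≤ c^(n+1) := pow_le_pow_left₀ (norm_nonneg _) hm _
        _ = c * (c/s)^n := by
            rw [div_eq_mul_inv, mul_pow, pow_succ]
            ring
    have htend : Filter.Tendsto (fun n : ℕ => c * (c/s)^n) Filter.atTop (nhds 0) := by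
      have h1 : Filter.Tendsto (fun n : ℕ => (c/s)^n) Filter.atTop (nhds 0) :=
        tendsto_pow_atTop_nhds_zero_of_lt_one (by positivity) ((div_lt_one hs0).mpr hc2)
      simpa using h1.const_mul c
    have hle : Metric.infDist (cfcₙ F x) (J:Set B) ≤ 0 := ge_of_tendsto' htend hqn
    have hzero : Metric.infDist (cfcₙ F x) (J:Set B) = 0 :=
      le_antisymm hle Metric.infDist_nonneg
    exact (hJ.mem_iff_infDist_zero hJne).mpr hzero
  -- (x - d^2)_+ ∈ J by taking limits
  have hy0 : cfcₙ (fun t : ℝ => max (t - d^2) 0) x ∈ J := by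
    have hcl : cfcₙ (fun t : ℝ => max (t - d^2) 0) x ∈ closure (J : Set B) := by
      rw [Metric.mem_closure_iff]
      intro ε hε
      refine ⟨cfcₙ (fun t : ℝ => max (t - (d^2 + ε/2)) 0) x, key _ (by linarith), ?_⟩
      rw [dist_eq_norm, ← cfcₙ_sub (fun t : ℝ => max (t - d^2) 0)
        (fun t : ℝ => max (t - (d^2 + ε/2)) 0) x (by fun_prop)
        (by simp only [zero_sub]; rw [max_eq_right (by nlinarith [sq_nonneg d])]) (by fun_prop)
        (by simp only [zero_sub]; rw [max_eq_right (by nlinarith)])]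
      refine lt_of_le_of_lt (norm_cfcₙ_le fun t _ => ?_) (by linarith : ε/2 < ε)
      rw [Real.norm_eq_abs]
      calc |max (t - d^2) 0 - max (t - (d^2 + ε/2)) 0|
          ≤ |(t - d^2) - (t - (d^2 + ε/2))| := abs_max_sub_max_le_abs _ _ _
        _ = ε/2 := by
            rw [show (t - d^2) - (t - (d^2 + ε/2)) = ε/2 by ring,
              abs_of_nonneg (by linarith)]
    rwa [hJ.closure_eq] at hcl
  -- the final construction
  set ρ' : ℝ → ℝ := fun u =>
    ((max (Real.sqrt u) d)⁻¹ * (Real.sqrt u + d)⁻¹) * min 1 (u/d^2) with hρ'_def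
  have hmaxd : ∀ u : ℝ, max (Real.sqrt u) d ≠ 0 := fun u =>
    ne_of_gt (lt_of_lt_of_le hdpos (le_max_right _ _))
  have hsumd : ∀ u : ℝ, Real.sqrt u + d ≠ 0 := fun u =>
    ne_of_gt (lt_of_lt_of_le hdpos (le_add_of_nonneg_left (Real.sqrt_nonneg u)))
  have hρ'c : Continuous ρ' := by
    apply Continuous.mul
    · exact ((Real.continuous_sqrt.max continuous_const).inv₀ hmaxd).mul
        ((Real.continuous_sqrt.add continuous_const).inv₀ hsumd)
    · fun_prop
  have hρ'0 : ρ' 0 = 0 := by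
    simp only [hρ'_def, zero_div]
    rw [min_eq_right (by norm_num), mul_zero]
  set Ψ : ℝ → ℝ := fun u => ρ' u * (max (u - d^2) 0) with hΨ_def
  have hF0c : Continuous (fun u : ℝ => max (u - d^2) 0) := by fun_prop
  have hF00 : (fun u : ℝ => max (u - d^2) 0) 0 = 0 := by
    simp only [zero_sub]; rw [max_eq_right (by nlinarith [sq_nonneg d])]
  have hΨc : Continuous Ψ := hρ'c.mul hF0c
  have hΨ0 : Ψ 0 = 0 := by rw [hΨ_def]; simp only [hρ'0, zero_mul]
  set cΨ : B := cfcₙ Ψ x with hcΨ_def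
  have hcJ : cΨ ∈ J := by
    rw [hcΨ_def, hΨ_def, cfcₙ_mul ρ' (fun u : ℝ => max (u - d^2) 0) x
      hρ'c.continuousOn hρ'0 hF0c.continuousOn hF00]
    exact J.mul_mem_left _ _ hy0
  have hcsa : IsSelfAdjoint cΨ := cfcₙ_predicate Ψ x
  refine ⟨b * cΨ, J.mul_mem_left _ _ hcJ, ?_⟩
  have hbj_ge : d ≤ ‖b - b * cΨ‖ := by
    rw [hd_def, ← dist_eq_norm]
    exact Metric.infDist_le_dist_of_mem (J.mul_mem_left _ _ hcJ)
  have hxc : x * cΨ = cfcₙ (fun u : ℝ => u * Ψ u) x := by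
    rw [cfcₙ_mul (fun u : ℝ => u) Ψ x continuousOn_id (by simp) hΨc.continuousOn hΨ0,
      cfcₙ_id' ℝ x hxsa]
  have hcx : cΨ * x = cfcₙ (fun u : ℝ => Ψ u * u) x := by
    rw [cfcₙ_mul Ψ (fun u : ℝ => u) x hΨc.continuousOn hΨ0 continuousOn_id (by simp),
      cfcₙ_id' ℝ x hxsa]
  have hcxc : cΨ * (x * cΨ) = cfcₙ (fun u : ℝ => Ψ u * (u * Ψ u)) x := by
    rw [cfcₙ_mul Ψ (fun u : ℝ => u * Ψ u) x hΨc.continuousOn hΨ0 (by fun_prop)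
      (by simp), ← hxc]
  have hexp : star (b - b * cΨ) * (b - b * cΨ) = x - x * cΨ - (cΨ * x - cΨ * (x * cΨ)) := by
    simp only [star_sub, star_mul, hcsa.star_eq, hx_def]
    noncomm_ring
  set W : ℝ → ℝ := fun u => u - u * Ψ u - (Ψ u * u - Ψ u * (u * Ψ u)) with hW_def
  have hW : star (b - b * cΨ) * (b - b * cΨ) = cfcₙ W x := by
    rw [hexp, hcxc, hxc, hcx, hW_def]
    rw [cfcₙ_sub (fun u : ℝ => u - u * Ψ u) (fun u : ℝ => Ψ u * u - Ψ u * (u * Ψ u)) x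
        (by fun_prop) (by simp [hΨ0]) (by fun_prop) (by simp [hΨ0]),
      cfcₙ_sub (fun u : ℝ => u) (fun u : ℝ => u * Ψ u) x continuousOn_id (by simp)
        (by fun_prop) (by simp [hΨ0]),
      cfcₙ_sub (fun u : ℝ => Ψ u * u) (fun u : ℝ => Ψ u * (u * Ψ u)) x
        (by fun_prop) (by simp [hΨ0]) (by fun_prop) (by simp [hΨ0]),
      cfcₙ_id' ℝ x hxsa]
  have hWb : ‖cfcₙ W x‖ ≤ d^2 := by
    apply norm_cfcₙ_le
    intro u hu
    have hu0 : 0 ≤ u := hxsp u hu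
    rw [Real.norm_eq_abs]
    have hWu : W u = u * (1 - Ψ u)^2 := by rw [hW_def]; ring
    by_cases hud : u ≤ d^2
    · have hΨu : Ψ u = 0 := by
        rw [hΨ_def]; simp only
        rw [max_eq_right (by linarith), mul_zero]
      rw [hWu, hΨu]
      rw [show u * ((1:ℝ) - 0)^2 = u by ring, abs_of_nonneg hu0]
      linarith
    · push_neg at hud
      have hsq : Real.sqrt u * Real.sqrt u = u := Real.mul_self_sqrt hu0
      have hds : d < Real.sqrt u := (Real.lt_sqrt hd0).mpr hud
      have hsqpos : 0 < Real.sqrt u := lt_trans hdpos hds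
      have hmax : max (Real.sqrt u) d = Real.sqrt u := max_eq_left hds.le
      have hmin : min 1 (u/d^2) = 1 :=
        min_eq_left (by rw [le_div_iff₀ (by positivity)]; nlinarith)
      have hmx : max (u - d^2) 0 = u - d^2 := max_eq_left (by linarith)
      have hΨu : Ψ u = 1 - d / Real.sqrt u := by
        rw [hΨ_def, hρ'_def]; simp only [hmax, hmin, hmx]
        have h1 : u - d^2 = (Real.sqrt u - d) * (Real.sqrt u + d) := by nlinarith
        rw [h1]
        field_simp
      have hval : u * (1 - Ψ u)^2 = d^2 := by
        rw [hΨu, show (1:ℝ) - (1 - d / Real.sqrt u) = d / Real.sqrt u by ring, div_pow,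
          show Real.sqrt u ^ 2 = u by rw [sq]; exact hsq]
        have hune : u ≠ 0 := ne_of_gt (lt_of_le_of_lt (by positivity) hud)
        field_simp
      rw [hWu, hval, abs_of_nonneg (by positivity)]
  have h1 : ‖b - b * cΨ‖ * ‖b - b * cΨ‖ ≤ d^2 := by
    rw [← CStarRing.norm_star_mul_self, hW]
    exact hWb
  have h2 : ‖b - b * cΨ‖ ≤ d := by nlinarith [norm_nonneg (b - b * cΨ)]
  linarith

end ProxAux2

/-- Closed two-sided ideals in C*-algebras are proximinal: the distance from `b` to `J`
(which is by definition the quotient norm `‖b + J‖` in `B/J`) is attained. -/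
theorem stmt_9 {B : Type*} [NonUnitalCStarAlgebra B]
    (J : TwoSidedIdeal B) (hJ : IsClosed (J : Set B)) (b : B) :
    ∃ j ∈ J, ‖b - j‖ = Metric.infDist b (J : Set B) :=
  stmt_9' J hJ b
    (fun hk => star_mem_of_isClosed J hJ hk)
    (fun hx hxJ f hf _ hδ hf0 => cfcn_mem_ideal J hx hxJ f hf hδ hf0)
    opow (fun _ => rfl) (fun _ _ => rfl) norm_opow_le
    (fun g x hx hg hg0 n => cfcn_mul_pow' g x hx hg hg0 n)
    qsp_star_mul_self_nonneg
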